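/- arXiv:1111.6306 — 9 statements merged into one kernel-verified Lean document; each statement's English description precedes it below -/
import Mathlib

section
/- For a Theta neuron with positive baseline current I > 0, the free evolution θ(t) = 2·arctan(tan(√I·t)/√I) (extended continuously across the singularities of tan) satisfies the ODE dθ/dt = (1+I) + (1−I)·cos θ with θ(0) = 0. -/
open Real

private lemma arctan_tan_exists (x : ℝ) (h : Real.cos x ≠ 0) :
    ∃ k : ℤ, Real.arctan (Real.tan x) = x - k * π := by
  have hπ := Real.pi_pos
  refine ⟨round (x / π), ?_⟩
  set k : ℤ := round (x / π) with hkdef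
  have h1 : |x - k * π| ≤ π / 2 := by
    have hb : |x / π - (k : ℝ)| ≤ 1 / 2 := abs_sub_round _
    have heq : (x / π - (k : ℝ)) * π = x - k * π := by field_simp
    calc |x - k * π| = |(x / π - (k : ℝ)) * π| := by rw [heq]
      _ = |x / π - (k : ℝ)| * |π| := abs_mul _ _
      _ = |x / π - (k : ℝ)| * π := by rw [abs_of_pos hπ]
      _ ≤ π / 2 := by nlinarith [hb, hπ]
  have hne1 : x - k * π ≠ π / 2 := by
    intro he
    apply h
    rw [Real.cos_eq_zero_iff]
    exact ⟨k, by linarith⟩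
  have hne2 : x - k * π ≠ -(π / 2) := by
    intro he
    apply h
    rw [Real.cos_eq_zero_iff]
    exact ⟨k - 1, by push_cast; linarith⟩
  rw [abs_le] at h1
  have h2 : -(π / 2) < x - k * π := lt_of_le_of_ne h1.1 (Ne.symm hne2)
  have h3 : x - k * π < π / 2 := lt_of_le_of_ne h1.2 hne1
  have hper : Real.tan (x - (k : ℝ) * π) = Real.tan x :=
    Real.tan_periodic.sub_int_mul_eq k
  rw [← hper, Real.arctan_tan h2 h3]

noncomputable def thetaF (r s : ℝ) : ℝ :=
  s + Real.arctan ((1 - r) * Real.sin s * Real.cos s /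
      (r * Real.cos s ^ 2 + Real.sin s ^ 2))

section Aux

variable {r : ℝ}

private lemma hD_pos (hr : 0 < r) (s : ℝ) : 0 < r * Real.cos s ^ 2 + Real.sin s ^ 2 := by
  rcases eq_or_ne (Real.cos s) 0 with hc | hc
  · have := Real.sin_sq_add_cos_sq s
    rw [hc] at this ⊢
    nlinarith
  · have h1 : 0 < Real.cos s ^ 2 := by positivity
    nlinarith [sq_nonneg (Real.sin s), mul_pos hr h1]

private lemma hQ_pos (hr : 0 < r) (s : ℝ) : 0 < r ^ 2 * Real.cos s ^ 2 + Real.sin s ^ 2 := by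
  rcases eq_or_ne (Real.cos s) 0 with hc | hc
  · have := Real.sin_sq_add_cos_sq s
    rw [hc] at this ⊢
    nlinarith
  · have h1 : 0 < Real.cos s ^ 2 := by positivity
    nlinarith [sq_nonneg (Real.sin s), mul_pos (mul_pos hr hr) h1, sq_abs r, sq_nonneg r, pow_pos hr 2, mul_pos (pow_pos hr 2) h1]

private lemma sqrt_key (hr : 0 < r) (s : ℝ) :
    Real.sqrt (1 + ((1 - r) * Real.sin s * Real.cos s /
        (r * Real.cos s ^ 2 + Real.sin s ^ 2)) ^ 2)
      = Real.sqrt (r ^ 2 * Real.cos s ^ 2 + Real.sin s ^ 2) /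
        (r * Real.cos s ^ 2 + Real.sin s ^ 2) := by
  have hD := hD_pos hr s
  have pyth := Real.sin_sq_add_cos_sq s
  have hiden : 1 + ((1 - r) * Real.sin s * Real.cos s /
      (r * Real.cos s ^ 2 + Real.sin s ^ 2)) ^ 2
      = (r ^ 2 * Real.cos s ^ 2 + Real.sin s ^ 2) /
        (r * Real.cos s ^ 2 + Real.sin s ^ 2) ^ 2 := by
    field_simp
    linear_combination (r ^ 2 * Real.cos s ^ 2 + Real.sin s ^ 2) * pyth
  rw [hiden, Real.sqrt_div (hQ_pos hr s).le, Real.sqrt_sq hD.le]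

private lemma cos_thetaF (hr : 0 < r) (s : ℝ) :
    Real.cos (thetaF r s)
      = r * Real.cos s / Real.sqrt (r ^ 2 * Real.cos s ^ 2 + Real.sin s ^ 2) := by
  have hD := hD_pos hr s
  have hQ := hQ_pos hr s
  have hsq : 0 < Real.sqrt (r ^ 2 * Real.cos s ^ 2 + Real.sin s ^ 2) :=
    Real.sqrt_pos.mpr hQ
  have pyth := Real.sin_sq_add_cos_sq s
  rw [thetaF, Real.cos_add, Real.cos_arctan, Real.sin_arctan, sqrt_key hr s]
  field_simp
  have hsq' : 0 < Real.sqrt (Real.cos s ^ 2 * r ^ 2 + Real.sin s ^ 2) :=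
    Real.sqrt_pos.mpr (by nlinarith [hQ])
  rw [div_eq_div_iff (mul_pos hsq' (by nlinarith [hD])).ne' hsq'.ne']
  linear_combination (Real.cos s * (r * Real.cos s ^ 2 + Real.sin s ^ 2) *
    Real.sqrt (Real.cos s ^ 2 * r ^ 2 + Real.sin s ^ 2) * r) * pyth

private lemma sin_thetaF (hr : 0 < r) (s : ℝ) :
    Real.sin (thetaF r s)
      = Real.sin s / Real.sqrt (r ^ 2 * Real.cos s ^ 2 + Real.sin s ^ 2) := by
  have hD := hD_pos hr s
  have hQ := hQ_pos hr s
  have hsq : 0 < Real.sqrt (r ^ 2 * Real.cos s ^ 2 + Real.sin s ^ 2) :=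
    Real.sqrt_pos.mpr hQ
  have pyth := Real.sin_sq_add_cos_sq s
  rw [thetaF, Real.sin_add, Real.cos_arctan, Real.sin_arctan, sqrt_key hr s]
  field_simp
  linear_combination (Real.sin s) * pyth

private lemma cos_two_thetaF (hr : 0 < r) (s : ℝ) :
    Real.cos (2 * thetaF r s)
      = (r ^ 2 * Real.cos s ^ 2 - Real.sin s ^ 2) /
        (r ^ 2 * Real.cos s ^ 2 + Real.sin s ^ 2) := by
  have hQ := hQ_pos hr s
  have hsq : 0 < Real.sqrt (r ^ 2 * Real.cos s ^ 2 + Real.sin s ^ 2) :=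
    Real.sqrt_pos.mpr hQ
  have hsq2 : Real.sqrt (r ^ 2 * Real.cos s ^ 2 + Real.sin s ^ 2) ^ 2
      = r ^ 2 * Real.cos s ^ 2 + Real.sin s ^ 2 := Real.sq_sqrt hQ.le
  rw [Real.cos_two_mul, cos_thetaF hr s]
  rw [div_pow]
  rw [hsq2]
  field_simp
  ring

private lemma algebra_step (Q D Num r : ℝ) (hQ : Q ≠ 0) (hD : D ≠ 0)
    (key : Q + Num = r) :
    r / Q = 1 + 1 / (Q / D ^ 2) * (Num / D ^ 2) := by
  have hD2 : (D : ℝ) ^ 2 ≠ 0 := pow_ne_zero _ hD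
  rw [one_div_div]
  have h1 : D ^ 2 / Q * (Num / D ^ 2) = Num / Q := by
    field_simp
  rw [h1, ← key, add_div, div_self hQ]

set_option maxHeartbeats 1000000 in
private lemma hasDerivAt_thetaF (hr : 0 < r) (s : ℝ) :
    HasDerivAt (thetaF r) (r / (r ^ 2 * Real.cos s ^ 2 + Real.sin s ^ 2)) s := by
  have hD := hD_pos hr s
  have hQ := hQ_pos hr s
  have pyth := Real.sin_sq_add_cos_sq s
  have hsin := Real.hasDerivAt_sin s
  have hcos := Real.hasDerivAt_cos s
  have hN : HasDerivAt (fun x => (1 - r) * Real.sin x * Real.cos x)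
      (((1 - r) * Real.cos s) * Real.cos s + ((1 - r) * Real.sin s) * (-Real.sin s)) s :=
    (hsin.const_mul (1 - r)).mul hcos
  have hDd : HasDerivAt (fun x => r * Real.cos x ^ 2 + Real.sin x ^ 2)
      (r * ((2 : ℕ) * Real.cos s ^ 1 * (-Real.sin s))
        + (2 : ℕ) * Real.sin s ^ 1 * Real.cos s) s :=
    ((hcos.pow 2).const_mul r).add (hsin.pow 2)
  have hX : HasDerivAt (fun x => (1 - r) * Real.sin x * Real.cos x /
      (r * Real.cos x ^ 2 + Real.sin x ^ 2))
      (((((1 - r) * Real.cos s) * Real.cos s + ((1 - r) * Real.sin s) * (-Real.sin s))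
          * (r * Real.cos s ^ 2 + Real.sin s ^ 2)
        - ((1 - r) * Real.sin s * Real.cos s)
          * (r * ((2 : ℕ) * Real.cos s ^ 1 * (-Real.sin s))
            + (2 : ℕ) * Real.sin s ^ 1 * Real.cos s))
        / (r * Real.cos s ^ 2 + Real.sin s ^ 2) ^ 2) s :=
    hN.div hDd hD.ne'
  have harc := (Real.hasDerivAt_arctan
    ((1 - r) * Real.sin s * Real.cos s / (r * Real.cos s ^ 2 + Real.sin s ^ 2))).comp s hX
  have hfull := (hasDerivAt_id s).add harc
  refine HasDerivAt.congr_deriv hfull (Eq.symm ?_)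
  have hiden : 1 + ((1 - r) * Real.sin s * Real.cos s /
      (r * Real.cos s ^ 2 + Real.sin s ^ 2)) ^ 2
      = (r ^ 2 * Real.cos s ^ 2 + Real.sin s ^ 2) /
        (r * Real.cos s ^ 2 + Real.sin s ^ 2) ^ 2 := by
    field_simp
    linear_combination (r ^ 2 * Real.cos s ^ 2 + Real.sin s ^ 2) * pyth
  rw [hiden]
  push_cast
  have key : (r ^ 2 * Real.cos s ^ 2 + Real.sin s ^ 2)
      + (((1 - r) * Real.cos s * Real.cos s + (1 - r) * Real.sin s * (-Real.sin s))
          * (r * Real.cos s ^ 2 + Real.sin s ^ 2)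
        - ((1 - r) * Real.sin s * Real.cos s)
          * (r * (2 * Real.cos s ^ 1 * (-Real.sin s)) + 2 * Real.sin s ^ 1 * Real.cos s)) = r := by
    linear_combination ((r - 1) * Real.sin s ^ 2 + r * (1 - r) * Real.cos s ^ 2 + r) * pyth
  exact algebra_step _ _ _ _ hQ.ne' hD.ne' key

end Aux

/-- For a Theta neuron with positive baseline current `I > 0`, the free evolution
`θ(t) = 2·arctan(tan(√I·t)/√I)`, extended continuously across the singularities of `tan`,
satisfies `dθ/dt = (1+I) + (1−I)·cos θ` with `θ(0) = 0`. -/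
theorem theta_neuron_free_evolution (I : ℝ) (hI : 0 < I) :
    ∃ θ : ℝ → ℝ, Continuous θ ∧ θ 0 = 0 ∧
      (∀ t : ℝ, HasDerivAt θ ((1 + I) + (1 - I) * Real.cos (θ t)) t) ∧
      (∀ t : ℝ, Real.cos (Real.sqrt I * t) ≠ 0 →
        ∃ k : ℤ, θ t = 2 * Real.arctan (Real.tan (Real.sqrt I * t) / Real.sqrt I)
          + 2 * π * k) := by
  set r : ℝ := Real.sqrt I with hrdef
  have hr : 0 < r := Real.sqrt_pos.mpr hI
  have hr2 : r ^ 2 = I := Real.sq_sqrt hI.le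
  refine ⟨fun t => 2 * thetaF r (r * t), ?_, ?_, ?_, ?_⟩
  · -- continuity
    have c1 : Continuous fun s : ℝ => (1 - r) * Real.sin s * Real.cos s := by
      continuity
    have c2 : Continuous fun s : ℝ => r * Real.cos s ^ 2 + Real.sin s ^ 2 := by
      continuity
    have c3 : Continuous (thetaF r) := by
      unfold thetaF
      exact continuous_id.add
        (Real.continuous_arctan.comp (c1.div c2 fun s => (hD_pos hr s).ne'))
    exact continuous_const.mul (c3.comp (continuous_const.mul continuous_id))
  · -- initial condition
    simp [thetaF]
  · -- ODE
    intro t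
    have h1 := (hasDerivAt_thetaF hr (r * t)).comp t ((hasDerivAt_id t).const_mul r)
    have h2 := h1.const_mul (2 : ℝ)
    refine HasDerivAt.congr_deriv h2 (Eq.symm ?_)
    beta_reduce
    have hQ := hQ_pos hr (r * t)
    rw [cos_two_thetaF hr (r * t)]
    rw [← hr2]
    have pyth := Real.sin_sq_add_cos_sq (r * t)
    have hQ := hQ_pos hr (r * t)
    field_simp
    linear_combination (2 * r ^ 2) * pyth
  · -- relation to arctan formula
    intro t hct
    have hQ := hQ_pos hr (r * t)
    have hsq : 0 < Real.sqrt (r ^ 2 * Real.cos (r * t) ^ 2 + Real.sin (r * t) ^ 2) :=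
      Real.sqrt_pos.mpr hQ
    have hcosu : Real.cos (thetaF r (r * t)) ≠ 0 := by
      rw [cos_thetaF hr (r * t)]
      exact div_ne_zero (mul_ne_zero hr.ne' hct) hsq.ne'
    have htan : Real.tan (thetaF r (r * t)) = Real.tan (r * t) / r := by
      rw [Real.tan_eq_sin_div_cos, sin_thetaF hr (r * t), cos_thetaF hr (r * t),
        Real.tan_eq_sin_div_cos]
      field_simp
    obtain ⟨k, hk⟩ := arctan_tan_exists (thetaF r (r * t)) hcosu
    refine ⟨k, ?_⟩
    rw [← htan, hk]
    ring
end

section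
/- For a Theta neuron with negative baseline current I < 0, the function θ(t) = 2·arctan(tanh(√(−I)·t)/√(−I)) solves dθ/dt = (1+I) + (1−I)cos θ with θ(0) = 0, and θ(t) is bounded (in particular θ(t) < 2π for all t ≥ 0), so no spike occurs without input. -/
open Real

/-- For a Theta neuron with negative baseline current `I < 0`, the function
`θ(t) = 2·arctan(tanh(√(−I)·t)/√(−I))` solves `dθ/dt = (1+I) + (1−I)cos θ` with `θ(0) = 0`,
and `θ(t)` is bounded (in particular `θ(t) < 2π` for all `t ≥ 0`), so no spike occurs. -/
theorem theta_neuron_negative_current_no_spike (I : ℝ) (hI : I < 0)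
    (θ : ℝ → ℝ)
    (hθ : θ = fun t => 2 * Real.arctan (Real.tanh (Real.sqrt (-I) * t) / Real.sqrt (-I))) :
    θ 0 = 0 ∧
    (∀ t : ℝ, HasDerivAt θ ((1 + I) + (1 - I) * Real.cos (θ t)) t) ∧
    (∃ C : ℝ, ∀ t : ℝ, |θ t| ≤ C) ∧
    (∀ t : ℝ, 0 ≤ t → θ t < 2 * π) := by
  subst hθ
  set s := Real.sqrt (-I) with hs
  have hs0 : 0 < s := Real.sqrt_pos.mpr (by linarith)
  have hsI : s ^ 2 = -I := Real.sq_sqrt (by linarith)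
  have habs : ∀ t : ℝ, |2 * Real.arctan (Real.tanh (s * t) / s)| ≤ π := by
    intro t
    have h1 := Real.arctan_lt_pi_div_two (Real.tanh (s * t) / s)
    have h2 := Real.neg_pi_div_two_lt_arctan (Real.tanh (s * t) / s)
    rw [abs_le]; constructor <;> nlinarith
  refine ⟨by simp, ?_, ⟨π, habs⟩, ?_⟩
  · intro t
    have hcosh : Real.cosh (s * t) ≠ 0 := (Real.cosh_pos (s * t)).ne'
    set x := Real.tanh (s * t) / s with hx
    have hdenom : (1 : ℝ) + x ^ 2 ≠ 0 := by positivity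
    -- derivative of t ↦ sinh (s*t) / cosh (s*t)
    have hlin : HasDerivAt (fun t : ℝ => s * t) s t := by
      simpa using (hasDerivAt_id t).const_mul s
    have hsinh : HasDerivAt (fun t : ℝ => Real.sinh (s * t)) (Real.cosh (s * t) * s) t :=
      (Real.hasDerivAt_sinh (s * t)).comp t hlin
    have hcoshd : HasDerivAt (fun t : ℝ => Real.cosh (s * t)) (Real.sinh (s * t) * s) t :=
      (Real.hasDerivAt_cosh (s * t)).comp t hlin
    have htanh : HasDerivAt (fun t : ℝ => Real.tanh (s * t)) (s / Real.cosh (s * t) ^ 2) t := by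
      have := hsinh.div hcoshd hcosh
      have heq : (fun t : ℝ => Real.sinh (s * t) / Real.cosh (s * t)) =
          fun t : ℝ => Real.tanh (s * t) := by
        funext u; rw [Real.tanh_eq_sinh_div_cosh]
      rw [show ((fun t : ℝ => Real.sinh (s * t)) / fun t : ℝ => Real.cosh (s * t)) = fun t : ℝ => Real.sinh (s * t) / Real.cosh (s * t) from rfl, heq] at this
      refine this.congr_deriv ?_; symm
      have hid := Real.cosh_sq_sub_sinh_sq (s * t)
      rw [div_left_inj' (pow_ne_zero 2 hcosh)]
      nlinarith
    have hinner : HasDerivAt (fun t : ℝ => Real.tanh (s * t) / s)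
        ((s / Real.cosh (s * t) ^ 2) / s) t := htanh.div_const s
    have harct : HasDerivAt (fun t : ℝ => Real.arctan (Real.tanh (s * t) / s))
        ((1 / (1 + x ^ 2)) * ((s / Real.cosh (s * t) ^ 2) / s)) t :=
      by have := (Real.hasDerivAt_arctan x).comp (h := fun t : ℝ => Real.tanh (s * t) / s) t hinner; exact this
    have hfull := harct.const_mul 2
    refine hfull.congr_deriv ?_; symm
    -- now the algebraic identity
    have hcos2 : Real.cos (2 * Real.arctan x) = 2 * Real.cos (Real.arctan x) ^ 2 - 1 := by
      rw [Real.cos_two_mul]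
    have hcosa : Real.cos (Real.arctan x) ^ 2 = 1 / (1 + x ^ 2) := by
      rw [Real.cos_arctan]
      rw [div_pow, one_pow, Real.sq_sqrt (by positivity)]
    have hI' : I = -s ^ 2 := by linarith
    have htanh_sq : Real.tanh (s * t) ^ 2 = 1 - 1 / Real.cosh (s * t) ^ 2 := by
      rw [Real.tanh_eq_sinh_div_cosh]
      have hid := Real.cosh_sq_sub_sinh_sq (s * t)
      field_simp
      nlinarith
    have hxval : x ^ 2 = (1 - 1 / Real.cosh (s * t) ^ 2) / s ^ 2 := by
      rw [hx, div_pow, htanh_sq]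
    rw [hcos2, hcosa, hI']
    rw [hxval]
    have hc2 : Real.cosh (s * t) ^ 2 ≠ 0 := pow_ne_zero 2 hcosh
    have hc1 : 1 ≤ Real.cosh (s * t) ^ 2 := by
      nlinarith [Real.one_le_cosh (s * t)]
    have hA : (0:ℝ) < -1 + s ^ 2 * Real.cosh (s * t) ^ 2 + Real.cosh (s * t) ^ 2 := by
      nlinarith
    have hD : Real.cosh (s * t) ^ 2 * s ^ 2 + (Real.cosh (s * t) ^ 2 - 1) ≠ 0 := by
      nlinarith
    field_simp [hD, hA.ne']
    ring_nf
    linear_combination (2*s^2) * (mul_inv_cancel₀ hA.ne')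
  · intro t _
    have := habs t
    have hπ : 0 < π := Real.pi_pos
    have h := abs_le.mp this
    linarith
end

section
/- Under the coordinate change θ(φ) = 2·arctan(√I·tan(φ/2 − π/2)) + π (continuously extended), the Theta neuron equation dθ/dt = (1+I) + (1−I)cos θ + (1 − cos θ)·u(t) with I > 0 transforms into the SNIPER phase equation dφ/dt = ω + (2/ω)(1 − cos φ)·u(t), where ω = 2√I. -/
open Real

/-- Under the coordinate change `θ(φ) = 2·arctan(√I·tan(φ/2 − π/2)) + π` (away from the
singularities of `tan`, i.e. where `sin(φ/2) ≠ 0`), the Theta neuron equation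
`dθ/dt = (1+I) + (1−I)cos θ + (1 − cos θ)·u` with `I > 0` transforms into the SNIPER phase
equation `dφ/dt = ω + (2/ω)(1 − cos φ)·u`, where `ω = 2√I`: the chain rule identity
`θ'(φ)·(ω + (2/ω)(1 − cos φ)u) = (1+I) + (1−I)cos(θ(φ)) + (1 − cos(θ(φ)))u` holds. -/
theorem theta_to_sniper_transformation (I : ℝ) (hI : 0 < I) (ω : ℝ) (hω : ω = 2 * Real.sqrt I)
    (T : ℝ → ℝ)
    (hT : T = fun φ => 2 * Real.arctan (Real.sqrt I * Real.tan (φ / 2 - π / 2)) + π) :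
    ∀ φ u : ℝ, Real.sin (φ / 2) ≠ 0 →
      deriv T φ * (ω + (2 / ω) * (1 - Real.cos φ) * u)
        = (1 + I) + (1 - I) * Real.cos (T φ) + (1 - Real.cos (T φ)) * u := by
  subst hT hω
  intro φ u hs
  set x : ℝ := φ / 2 - π / 2 with hx
  have hq : Real.sqrt I > 0 := Real.sqrt_pos.mpr hI
  have hq2 : Real.sqrt I ^ 2 = I := Real.sq_sqrt hI.le
  have hcx : Real.cos x = Real.sin (φ / 2) := Real.cos_sub_pi_div_two _
  have hsx : Real.sin x = -Real.cos (φ / 2) := Real.sin_sub_pi_div_two _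
  have hcx0 : Real.cos x ≠ 0 := by rw [hcx]; exact hs
  set y : ℝ := Real.sqrt I * Real.tan x with hy
  have hy2 : (0:ℝ) < 1 + y ^ 2 := by positivity
  -- derivative
  have h1 : HasDerivAt (fun φ : ℝ => φ / 2 - π / 2) (1 / 2) φ := by
    simpa using ((hasDerivAt_id φ).div_const 2).sub_const (π / 2)
  have h3 : HasDerivAt (fun φ : ℝ => Real.tan (φ / 2 - π / 2))
      (1 / Real.cos x ^ 2 * (1 / 2)) φ := by
    simpa [Function.comp_def] using (Real.hasDerivAt_tan hcx0).comp φ h1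
  have h5 : HasDerivAt (fun φ : ℝ => 2 * Real.arctan (Real.sqrt I * Real.tan (φ / 2 - π / 2)) + π)
      (2 * (1 / (1 + y ^ 2) * (Real.sqrt I * (1 / Real.cos x ^ 2 * (1 / 2))))) φ := by
    have := ((Real.hasDerivAt_arctan y).comp φ (h3.const_mul (Real.sqrt I))).const_mul 2
    simpa [Function.comp, hy, mul_comm, mul_assoc, mul_left_comm] using this.add_const π
  have hD : deriv (fun φ : ℝ => 2 * Real.arctan (Real.sqrt I * Real.tan (φ / 2 - π / 2)) + π) φ
      = 2 * (1 / (1 + y ^ 2) * (Real.sqrt I * (1 / Real.cos x ^ 2 * (1 / 2)))) := h5.deriv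
  -- cos of T φ
  have hcosT : Real.cos (2 * Real.arctan y + π) = (y ^ 2 - 1) / (1 + y ^ 2) := by
    rw [Real.cos_add_pi, Real.cos_two_mul, Real.cos_arctan]
    rw [div_pow, one_pow, Real.sq_sqrt hy2.le]
    field_simp
    ring
  -- cos φ
  have hcphi : 1 - Real.cos φ = 2 * Real.cos x ^ 2 := by
    have h2 : Real.cos φ = 2 * Real.cos (φ / 2) ^ 2 - 1 := by
      have h := Real.cos_two_mul (φ / 2)
      rw [show 2 * (φ / 2) = φ by ring] at h
      exact h
    have hp := Real.sin_sq_add_cos_sq (φ / 2)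
    rw [h2, hcx]; nlinarith [hp]
  rw [hD, hcphi]
  simp only [hy] at hcosT ⊢
  rw [hcosT]
  have hpyth : Real.sin x ^ 2 + Real.cos x ^ 2 = 1 := Real.sin_sq_add_cos_sq x
  rw [Real.tan_eq_sin_div_cos] at *
  have h1y : 1 + (Real.sqrt I * (Real.sin x / Real.cos x)) ^ 2 ≠ 0 := by positivity
  field_simp
  linear_combination (-8 * Real.cos x ^ 2 * Real.sqrt I ^ 3 *
      (Real.cos x ^ 2 + (Real.sqrt I * Real.sin x) ^ 2) + (-2 * Real.sqrt I ^ 2 + 8 * Real.sqrt I ^ 3 * Real.cos x ^ 4 + 8 * Real.sqrt I ^ 5 * Real.cos x ^ 2 * Real.sin x ^ 2)) * hpyth +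
    (8 * Real.cos x ^ 4 * Real.sqrt I *
      (Real.cos x ^ 2 + (Real.sqrt I * Real.sin x) ^ 2) + (-(8 * Real.sqrt I * Real.cos x ^ 6 + 8 * Real.sqrt I ^ 3 * Real.cos x ^ 4 * Real.sin x ^ 2 - 2 * Real.cos x ^ 2))) * hq2
end

section
/- For the ensemble of Theta neurons with drift f(Θ) = (αᵢ + βᵢ cos θᵢ)ᵢ and control field Z(Θ) = (1 − cos θᵢ)ᵢ, where αᵢ = 1 + Iᵢ and βᵢ = 1 − Iᵢ, the iterated Lie brackets satisfy ad_f^{2k−1} Z = ((−1)^{k−1} 2^k (αᵢ − βᵢ)^{k−1} sin θᵢ)ᵢ and ad_f^{2k} Z = ((−1)^{k−1} 2^k (αᵢ − βᵢ)^{k−1}(αᵢ cos θᵢ + βᵢ))ᵢ for all positive integers k. -/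
open Real

/-- The Lie bracket `[g,h] = (Dh)g − (Dg)h` of vector fields on `ℝⁿ`. -/
noncomputable def lieBracketVF {n : ℕ} (g h : (Fin n → ℝ) → (Fin n → ℝ)) :
    (Fin n → ℝ) → (Fin n → ℝ) :=
  fun Θ => fderiv ℝ h Θ (g Θ) - fderiv ℝ g Θ (h Θ)

/-- Iterated Lie brackets `ad_f^k Z`, with `ad_f^0 Z = Z`. -/
noncomputable def adVF {n : ℕ} (f Z : (Fin n → ℝ) → (Fin n → ℝ)) :
    ℕ → (Fin n → ℝ) → (Fin n → ℝ)
  | 0 => Z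
  | k + 1 => lieBracketVF f (adVF f Z k)

lemma diag_hasFDerivAt {n : ℕ} (F F' : Fin n → ℝ → ℝ)
    (hF : ∀ i x, HasDerivAt (F i) (F' i x) x) (Θ : Fin n → ℝ) :
    HasFDerivAt (fun Θ : Fin n → ℝ => fun i => F i (Θ i))
      (ContinuousLinearMap.pi fun i =>
        (F' i (Θ i)) • (ContinuousLinearMap.proj i : (Fin n → ℝ) →L[ℝ] ℝ)) Θ := by
  apply hasFDerivAt_pi.2
  intro i
  exact (hF i (Θ i)).comp_hasFDerivAt Θ
    ((ContinuousLinearMap.proj i : (Fin n → ℝ) →L[ℝ] ℝ).hasFDerivAt)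

lemma bracket_diag {n : ℕ} (G H G' H' : Fin n → ℝ → ℝ)
    (hG : ∀ i x, HasDerivAt (G i) (G' i x) x)
    (hH : ∀ i x, HasDerivAt (H i) (H' i x) x) :
    lieBracketVF (fun Θ i => G i (Θ i)) (fun Θ i => H i (Θ i))
      = fun Θ i => H' i (Θ i) * G i (Θ i) - G' i (Θ i) * H i (Θ i) := by
  funext Θ i
  have hGd := (diag_hasFDerivAt G G' hG Θ).fderiv
  have hHd := (diag_hasFDerivAt H H' hH Θ).fderiv
  simp only [lieBracketVF, hGd, hHd, Pi.sub_apply, ContinuousLinearMap.pi_apply,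
    ContinuousLinearMap.smul_apply, ContinuousLinearMap.proj_apply, smul_eq_mul]

lemma hasDerivAt_f {n : ℕ} (α β : Fin n → ℝ) :
    ∀ (i : Fin n) (x : ℝ),
      HasDerivAt (fun x => α i + β i * Real.cos x) (β i * (-Real.sin x)) x :=
  fun i x => ((Real.hasDerivAt_cos x).const_mul (β i)).const_add (α i)

lemma bracket_f_Z {n : ℕ} (α β : Fin n → ℝ) :
    lieBracketVF (fun Θ i => α i + β i * Real.cos (Θ i)) (fun Θ i => 1 - Real.cos (Θ i))
      = fun Θ i => (α i + β i) * Real.sin (Θ i) := by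
  have h := bracket_diag (fun i x => α i + β i * Real.cos x) (fun i x => 1 - Real.cos x)
    (fun i x => β i * (-Real.sin x)) (fun i x => -(-Real.sin x))
    (hasDerivAt_f α β) (fun i x => (Real.hasDerivAt_cos x).const_sub 1)
  rw [h]
  funext Θ i
  beta_reduce
  ring

lemma bracket_f_sin {n : ℕ} (α β c : Fin n → ℝ) :
    lieBracketVF (fun Θ i => α i + β i * Real.cos (Θ i)) (fun Θ i => c i * Real.sin (Θ i))
      = fun Θ i => c i * (α i * Real.cos (Θ i) + β i) := by
  have h := bracket_diag (fun i x => α i + β i * Real.cos x) (fun i x => c i * Real.sin x)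
    (fun i x => β i * (-Real.sin x)) (fun i x => c i * Real.cos x)
    (hasDerivAt_f α β) (fun i x => (Real.hasDerivAt_sin x).const_mul (c i))
  rw [h]
  funext Θ i
  beta_reduce
  linear_combination (c i * β i) * Real.sin_sq_add_cos_sq (Θ i)

lemma bracket_f_cos {n : ℕ} (α β c : Fin n → ℝ) :
    lieBracketVF (fun Θ i => α i + β i * Real.cos (Θ i))
        (fun Θ i => c i * (α i * Real.cos (Θ i) + β i))
      = fun Θ i => (c i * (β i ^ 2 - α i ^ 2)) * Real.sin (Θ i) := by
  have h := bracket_diag (fun i x => α i + β i * Real.cos x)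
    (fun i x => c i * (α i * Real.cos x + β i))
    (fun i x => β i * (-Real.sin x)) (fun i x => c i * (α i * (-Real.sin x)))
    (hasDerivAt_f α β)
    (fun i x => (((Real.hasDerivAt_cos x).const_mul (α i)).add_const (β i)).const_mul (c i))
  rw [h]
  funext Θ i
  ring

/-- For the ensemble of Theta neurons with drift `f(Θ)ᵢ = αᵢ + βᵢ cos θᵢ` and control field
`Z(Θ)ᵢ = 1 − cos θᵢ`, where `αᵢ = 1 + Iᵢ` and `βᵢ = 1 − Iᵢ`, the iterated Lie brackets are
`ad_f^{2k−1} Z = ((−1)^{k−1} 2^k (αᵢ − βᵢ)^{k−1} sin θᵢ)ᵢ` and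
`ad_f^{2k} Z = ((−1)^{k−1} 2^k (αᵢ − βᵢ)^{k−1}(αᵢ cos θᵢ + βᵢ))ᵢ` for all `k ≥ 1`. -/
theorem theta_ensemble_lie_brackets (n : ℕ) (I : Fin n → ℝ)
    (α β : Fin n → ℝ) (hα : ∀ i, α i = 1 + I i) (hβ : ∀ i, β i = 1 - I i)
    (f Z : (Fin n → ℝ) → (Fin n → ℝ))
    (hf : f = fun Θ i => α i + β i * Real.cos (Θ i))
    (hZ : Z = fun Θ i => 1 - Real.cos (Θ i)) :
    ∀ k : ℕ, 1 ≤ k →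
      (adVF f Z (2 * k - 1)
        = fun Θ i => (-1 : ℝ) ^ (k - 1) * 2 ^ k * (α i - β i) ^ (k - 1) * Real.sin (Θ i)) ∧
      (adVF f Z (2 * k)
        = fun Θ i => (-1 : ℝ) ^ (k - 1) * 2 ^ k * (α i - β i) ^ (k - 1)
            * (α i * Real.cos (Θ i) + β i)) := by
  subst hf hZ
  have hsum : ∀ i, α i + β i = 2 := fun i => by rw [hα, hβ]; ring
  have main : ∀ m : ℕ,
      (adVF (fun Θ i => α i + β i * Real.cos (Θ i)) (fun Θ i => 1 - Real.cos (Θ i)) (2 * m + 1)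
        = fun Θ i => (-1 : ℝ) ^ m * 2 ^ (m + 1) * (α i - β i) ^ m * Real.sin (Θ i)) ∧
      (adVF (fun Θ i => α i + β i * Real.cos (Θ i)) (fun Θ i => 1 - Real.cos (Θ i)) (2 * m + 2)
        = fun Θ i => (-1 : ℝ) ^ m * 2 ^ (m + 1) * (α i - β i) ^ m
            * (α i * Real.cos (Θ i) + β i)) := by
    intro m
    induction m with
    | zero =>
      constructor
      · show lieBracketVF _ (adVF _ _ 0) = _
        show lieBracketVF _ (fun Θ i => 1 - Real.cos (Θ i)) = _
        rw [bracket_f_Z]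
        funext Θ i
        rw [hsum]
        ring
      · show lieBracketVF _ (adVF _ _ 1) = _
        have h1 : adVF (fun Θ i => α i + β i * Real.cos (Θ i))
            (fun Θ i => 1 - Real.cos (Θ i)) 1
            = fun Θ i => ((fun i => (-1 : ℝ) ^ 0 * 2 ^ 1 * (α i - β i) ^ 0) i)
              * Real.sin (Θ i) := by
          show lieBracketVF _ (fun Θ i => 1 - Real.cos (Θ i)) = _
          rw [bracket_f_Z]
          funext Θ i
          rw [hsum]; ring
        rw [h1, bracket_f_sin]
    | succ m ih =>
      obtain ⟨ih1, ih2⟩ := ih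
      have e1 : 2 * (m + 1) + 1 = (2 * m + 2) + 1 := by ring
      have e2 : 2 * (m + 1) + 2 = (2 * (m + 1) + 1) + 1 := by ring
      have step1 : adVF (fun Θ i => α i + β i * Real.cos (Θ i))
          (fun Θ i => 1 - Real.cos (Θ i)) (2 * (m + 1) + 1)
          = fun Θ i => (-1 : ℝ) ^ (m + 1) * 2 ^ (m + 2) * (α i - β i) ^ (m + 1)
              * Real.sin (Θ i) := by
        rw [e1]
        show lieBracketVF _ (adVF _ _ (2 * m + 2)) = _
        have h2 : adVF (fun Θ i => α i + β i * Real.cos (Θ i))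
            (fun Θ i => 1 - Real.cos (Θ i)) (2 * m + 2)
            = fun Θ i => ((fun i => (-1 : ℝ) ^ m * 2 ^ (m + 1) * (α i - β i) ^ m) i)
                * (α i * Real.cos (Θ i) + β i) := ih2
        rw [h2, bracket_f_cos]
        funext Θ i
        have h4 : β i ^ 2 - α i ^ 2 = -((α i - β i) * (α i + β i)) := by ring
        rw [h4, hsum]
        ring
      refine ⟨step1, ?_⟩
      rw [e2]
      show lieBracketVF _ (adVF _ _ (2 * (m + 1) + 1)) = _
      have h3 : adVF (fun Θ i => α i + β i * Real.cos (Θ i))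
          (fun Θ i => 1 - Real.cos (Θ i)) (2 * (m + 1) + 1)
          = fun Θ i => ((fun i => (-1 : ℝ) ^ (m + 1) * 2 ^ (m + 2) * (α i - β i) ^ (m + 1)) i)
              * Real.sin (Θ i) := step1
      rw [h3, bracket_f_sin]
  intro k hk
  obtain ⟨m, rfl⟩ := Nat.exists_eq_add_of_le hk
  have e1 : 2 * (1 + m) - 1 = 2 * m + 1 := by omega
  have e2 : 2 * (1 + m) = 2 * m + 2 := by omega
  have e3 : 1 + m - 1 = m := by omega
  rw [e1, e2, e3]
  have hp : (2 : ℝ) ^ (1 + m) = 2 ^ (m + 1) := by rw [Nat.add_comm]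
  constructor
  · rw [(main m).1]; funext Θ i; rw [hp]
  · rw [(main m).2]; funext Θ i; rw [hp]
end

section
/- If ω₁, …, ωₙ are distinct positive reals, then for every Θ = (θ₁,…,θₙ) ∈ ℝⁿ, the vectors v_k(Θ) = ((ωᵢ²/2)^{k−1} sin θᵢ)ᵢ and w_k(Θ) = ((ωᵢ²/2)^{k−1}((1 + ωᵢ²/4)cos θᵢ + 1 − ωᵢ²/4))ᵢ for k = 1, 2, 3, …, together with f(Θ) = (1 + ωᵢ²/4 + (1 − ωᵢ²/4)cos θᵢ)ᵢ, span ℝⁿ. -/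
open Real

lemma vandermonde_aux {n : ℕ} (μ a : Fin n → ℝ) (hμ : Function.Injective μ)
    (h : ∀ m : ℕ, ∑ i, a i * μ i ^ m = 0) (i : Fin n) : a i = 0 := by
  classical
  have claim : ∀ p : Polynomial ℝ, ∑ j, a j * p.eval (μ j) = 0 := by
    intro p
    induction p using Polynomial.induction_on' with
    | add p q hp hq =>
        simp only [Polynomial.eval_add, mul_add, Finset.sum_add_distrib, hp, hq, add_zero]
    | monomial m c =>
        simp only [Polynomial.eval_monomial]
        calc ∑ j, a j * (c * μ j ^ m) = c * ∑ j, a j * μ j ^ m := by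
              rw [Finset.mul_sum]; exact Finset.sum_congr rfl fun j _ => by ring
          _ = 0 := by rw [h m, mul_zero]
  set q : Polynomial ℝ :=
    ∏ j ∈ Finset.univ.erase i, (Polynomial.X - Polynomial.C (μ j)) with hqdef
  have hsum := claim q
  have hzero : ∀ j ∈ Finset.univ, j ≠ i → a j * q.eval (μ j) = 0 := by
    intro j _ hj
    have hq0 : q.eval (μ j) = 0 := by
      rw [hqdef, Polynomial.eval_prod]
      exact Finset.prod_eq_zero (Finset.mem_erase.mpr ⟨hj, Finset.mem_univ j⟩) (by simp)
    rw [hq0, mul_zero]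
  rw [Finset.sum_eq_single i hzero (fun h => absurd (Finset.mem_univ i) h)] at hsum
  have hne : q.eval (μ i) ≠ 0 := by
    rw [hqdef, Polynomial.eval_prod]
    apply Finset.prod_ne_zero_iff.mpr
    intro j hj
    simp only [Polynomial.eval_sub, Polynomial.eval_X, Polynomial.eval_C]
    exact sub_ne_zero.mpr fun h => (Finset.mem_erase.mp hj).1 (hμ h.symm)
  exact (mul_eq_zero.mp hsum).resolve_right hne

/-- Lie algebra rank condition for an ensemble of `n` Theta neurons with distinct positive
natural frequencies `ωᵢ`: for every `Θ ∈ ℝⁿ`, the vectors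
`v_k(Θ) = ((ωᵢ²/2)^{k−1} sin θᵢ)ᵢ`, `w_k(Θ) = ((ωᵢ²/2)^{k−1}((1+ωᵢ²/4)cos θᵢ + 1 − ωᵢ²/4))ᵢ`
for `k ≥ 1`, together with `f(Θ) = (1 + ωᵢ²/4 + (1 − ωᵢ²/4)cos θᵢ)ᵢ`, span `ℝⁿ`. -/
theorem theta_ensemble_larc (n : ℕ) (ω : Fin n → ℝ) (hpos : ∀ i, 0 < ω i)
    (hdist : Function.Injective ω) (Θ : Fin n → ℝ) :
    Submodule.span ℝ
      (insert (fun i => 1 + ω i ^ 2 / 4 + (1 - ω i ^ 2 / 4) * Real.cos (Θ i))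
        ({x : Fin n → ℝ | ∃ k : ℕ, 1 ≤ k ∧
          (x = fun i => (ω i ^ 2 / 2) ^ (k - 1) * Real.sin (Θ i)) } ∪
         {x : Fin n → ℝ | ∃ k : ℕ, 1 ≤ k ∧
          (x = fun i => (ω i ^ 2 / 2) ^ (k - 1)
              * ((1 + ω i ^ 2 / 4) * Real.cos (Θ i) + 1 - ω i ^ 2 / 4)) })) = ⊤ := by
  classical
  by_contra hn
  obtain ⟨φ, hφ0, hφ⟩ :=
    Submodule.exists_dual_map_eq_bot_of_lt_top (lt_top_iff_ne_top.mpr hn) inferInstance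
  have hvanish : ∀ x ∈
      (insert (fun i => 1 + ω i ^ 2 / 4 + (1 - ω i ^ 2 / 4) * Real.cos (Θ i))
        ({x : Fin n → ℝ | ∃ k : ℕ, 1 ≤ k ∧
          (x = fun i => (ω i ^ 2 / 2) ^ (k - 1) * Real.sin (Θ i)) } ∪
         {x : Fin n → ℝ | ∃ k : ℕ, 1 ≤ k ∧
          (x = fun i => (ω i ^ 2 / 2) ^ (k - 1)
              * ((1 + ω i ^ 2 / 4) * Real.cos (Θ i) + 1 - ω i ^ 2 / 4)) })),
      φ x = 0 := by
    intro x hx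
    have : φ x ∈ Submodule.map φ (Submodule.span ℝ _) :=
      Submodule.mem_map_of_mem (Submodule.subset_span hx)
    rw [hφ] at this
    simpa using this
  set c : Fin n → ℝ := fun i => φ (fun j => if i = j then 1 else 0) with hc
  have hrep : ∀ x : Fin n → ℝ, φ x = ∑ i, x i * c i := by
    intro x
    rw [LinearMap.pi_apply_eq_sum_univ φ x]
    exact Finset.sum_congr rfl fun i _ => by rw [smul_eq_mul]
  have hμinj : Function.Injective (fun i => ω i ^ 2 / 2) := by
    intro i j hij
    simp only at hij
    apply hdist
    nlinarith [hpos i, hpos j]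
  -- sin part
  have hsin : ∀ i, c i * Real.sin (Θ i) = 0 := by
    apply vandermonde_aux _ _ hμinj
    intro m
    have h0 := hvanish (fun i => (ω i ^ 2 / 2) ^ (m + 1 - 1) * Real.sin (Θ i))
      (Set.mem_insert_iff.mpr (Or.inr (Or.inl ⟨m + 1, Nat.le_add_left 1 m, rfl⟩)))
    rw [hrep] at h0
    rw [← h0]
    exact Finset.sum_congr rfl fun i _ => by simp; ring
  -- cos part
  have hcos : ∀ i, c i * ((1 + ω i ^ 2 / 4) * Real.cos (Θ i) + (1 - ω i ^ 2 / 4)) = 0 := by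
    apply vandermonde_aux _ _ hμinj
    intro m
    have h0 := hvanish (fun i => (ω i ^ 2 / 2) ^ (m + 1 - 1)
        * ((1 + ω i ^ 2 / 4) * Real.cos (Θ i) + 1 - ω i ^ 2 / 4))
      (Set.mem_insert_iff.mpr (Or.inr (Or.inr ⟨m + 1, Nat.le_add_left 1 m, rfl⟩)))
    rw [hrep] at h0
    rw [← h0]
    exact Finset.sum_congr rfl fun i _ => by simp; ring
  have hczero : ∀ i, c i = 0 := by
    intro i
    by_contra hci
    have hs : Real.sin (Θ i) = 0 := by
      rcases mul_eq_zero.mp (hsin i) with h | h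
      · exact absurd h hci
      · exact h
    have hc2 : (1 + ω i ^ 2 / 4) * Real.cos (Θ i) + (1 - ω i ^ 2 / 4) = 0 := by
      rcases mul_eq_zero.mp (hcos i) with h | h
      · exact absurd h hci
      · exact h
    have hcos1 : Real.cos (Θ i) = 1 ∨ Real.cos (Θ i) = -1 := by
      have := Real.sin_sq_add_cos_sq (Θ i)
      rw [hs] at this
      have h1 : Real.cos (Θ i) ^ 2 = 1 := by nlinarith
      rcases sq_eq_one_iff.mp h1 with h | h
      · exact Or.inl h
      · exact Or.inr h
    have hω := hpos i
    rcases hcos1 with h | h <;> rw [h] at hc2 <;> nlinarith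
  exact hφ0 (LinearMap.ext fun x => by rw [hrep]; simp [hczero])
end

section
/- For the SNIPER ensemble with f(Θ) = (ω₁,…,ωₙ)ᵀ constant and Z(Θ) = (zᵢ(1 − cos θᵢ))ᵢ, the iterated Lie brackets are ad_f^{2k−1} Z = ((−1)^{k−1} zᵢ ωᵢ^{2k−1} sin θᵢ)ᵢ and ad_f^{2k} Z = ((−1)^{k−1} zᵢ ωᵢ^{2k} cos θᵢ)ᵢ for each positive integer k, and if the ωᵢ are distinct positive reals and zᵢ ≠ 0 then span{f, Z, ad_f^m Z : m ≥ 1} = ℝⁿ at every point Θ. -/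
open Real

noncomputable def Ttrig (m : ℕ) : ℝ → ℝ := fun x =>
  if m % 4 = 1 then Real.sin x else if m % 4 = 2 then Real.cos x
  else if m % 4 = 3 then -Real.sin x else -Real.cos x

lemma Ttrig_hasDerivAt (m : ℕ) (x : ℝ) : HasDerivAt (Ttrig m) (Ttrig (m+1) x) x := by
  have h : m % 4 = 0 ∨ m % 4 = 1 ∨ m % 4 = 2 ∨ m % 4 = 3 := by omega
  unfold Ttrig
  rcases h with h|h|h|h <;>
    [ (have h1 : (m+1) % 4 = 1 := by omega);
      (have h1 : (m+1) % 4 = 2 := by omega);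
      (have h1 : (m+1) % 4 = 3 := by omega);
      (have h1 : (m+1) % 4 = 0 := by omega)] <;>
    simp only [h, h1] <;> norm_num
  · exact (Real.hasDerivAt_cos x).neg.congr_deriv (by ring)
  · exact Real.hasDerivAt_sin x
  · exact (Real.hasDerivAt_cos x).congr_deriv (by ring)
  · exact (Real.hasDerivAt_sin x).neg

lemma bracket_formula {n : ℕ} (ω : Fin n → ℝ) (c : Fin n → ℝ) (g g' : ℝ → ℝ)
    (hg : ∀ x, HasDerivAt g (g' x) x) :
    lieBracketVF (fun _ i => ω i) (fun Θ i => c i * g (Θ i))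
      = fun Θ i => c i * ω i * g' (Θ i) := by
  funext Θ j
  have hD : HasFDerivAt (fun Θ : Fin n → ℝ => fun i => c i * g (Θ i))
      (ContinuousLinearMap.pi fun i => ((c i * g' (Θ i)) • ContinuousLinearMap.proj i : (Fin n → ℝ) →L[ℝ] ℝ)) Θ := by
    refine hasFDerivAt_pi.mpr fun i => ?_
    have h1 : HasDerivAt (fun t => c i * g t) (c i * g' (Θ i)) (Θ i) := (hg (Θ i)).const_mul _
    have h2 : HasFDerivAt (fun Θ : Fin n → ℝ => Θ i)
        (ContinuousLinearMap.proj i : (Fin n → ℝ) →L[ℝ] ℝ) Θ := hasFDerivAt_apply i Θ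
    have h3 := h1.comp_hasFDerivAt Θ h2
    exact h3
  simp only [lieBracketVF, fderiv_fun_const, Pi.zero_apply, ContinuousLinearMap.zero_apply,
    hD.fderiv]
  simp [ContinuousLinearMap.proj]
  ring

lemma adVF_eq {n : ℕ} (ω z : Fin n → ℝ) : ∀ m : ℕ,
    adVF (fun _ i => ω i) (fun Θ i => z i * (1 - Real.cos (Θ i))) (m + 1)
      = fun Θ i => z i * ω i ^ (m + 1) * Ttrig (m + 1) (Θ i) := by
  intro m
  induction m with
  | zero =>
    show lieBracketVF _ (adVF _ _ 0) = _
    rw [show adVF (fun _ i => ω i) (fun Θ i => z i * (1 - Real.cos (Θ i))) 0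
      = fun Θ i => z i * (1 - Real.cos (Θ i)) from rfl]
    have hg : ∀ x : ℝ, HasDerivAt (fun x => 1 - Real.cos x) (Real.sin x) x := fun x =>
      ((Real.hasDerivAt_cos x).const_sub 1).congr_deriv (by ring)
    rw [bracket_formula ω z _ _ hg]
    funext Θ i
    simp [Ttrig]
  | succ m ih =>
    show lieBracketVF _ (adVF _ _ (m + 1)) = _
    rw [ih]
    have : (fun (Θ : Fin n → ℝ) i => z i * ω i ^ (m + 1) * Ttrig (m + 1) (Θ i))
        = fun Θ i => (z i * ω i ^ (m + 1)) * Ttrig (m + 1) (Θ i) := rfl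
    rw [this, bracket_formula ω _ _ _ (Ttrig_hasDerivAt (m + 1))]
    funext Θ i
    ring

lemma Ttrig_odd (k : ℕ) (hk : 1 ≤ k) :
    Ttrig (2 * k - 1) = fun x => (-1 : ℝ) ^ (k - 1) * Real.sin x := by
  funext x
  rcases Nat.even_or_odd k with ⟨a, ha⟩ | ⟨a, ha⟩
  · have h1 : (2 * k - 1) % 4 = 3 := by omega
    have h2 : Odd (k - 1) := ⟨a - 1, by omega⟩
    simp [Ttrig, h1, h2.neg_one_pow]
  · have h1 : (2 * k - 1) % 4 = 1 := by omega
    have h2 : Even (k - 1) := ⟨a, by omega⟩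
    simp [Ttrig, h1, h2.neg_one_pow]

lemma Ttrig_even (k : ℕ) (hk : 1 ≤ k) :
    Ttrig (2 * k) = fun x => (-1 : ℝ) ^ (k - 1) * Real.cos x := by
  funext x
  rcases Nat.even_or_odd k with ⟨a, ha⟩ | ⟨a, ha⟩
  · have h1 : (2 * k) % 4 = 0 := by omega
    have h2 : Odd (k - 1) := ⟨a - 1, by omega⟩
    simp [Ttrig, h1, h2.neg_one_pow]
  · have h1 : (2 * k) % 4 = 2 := by omega
    have h2 : Even (k - 1) := ⟨a, by omega⟩
    simp [Ttrig, h1, h2.neg_one_pow]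

lemma span_smul_mem {n : ℕ} {V : Submodule ℝ (Fin n → ℝ)} {c : ℝ} {v : Fin n → ℝ}
    (hc : c ≠ 0) (h : c • v ∈ V) : v ∈ V := by
  have := V.smul_mem c⁻¹ h
  rwa [smul_smul, inv_mul_cancel₀ hc, one_smul] at this

lemma Ttrig_mod (k r : ℕ) : Ttrig (4 * k + r) = Ttrig r := by
  have h : (4 * k + r) % 4 = r % 4 := by omega
  unfold Ttrig
  rw [h]

/-- For the SNIPER ensemble with constant drift `f(Θ) = (ω₁,…,ωₙ)` and
`Z(Θ)ᵢ = zᵢ(1 − cos θᵢ)`, the iterated Lie brackets are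
`ad_f^{2k−1} Z = ((−1)^{k−1} zᵢ ωᵢ^{2k−1} sin θᵢ)ᵢ` and
`ad_f^{2k} Z = ((−1)^{k−1} zᵢ ωᵢ^{2k} cos θᵢ)ᵢ` for `k ≥ 1`; and if the `ωᵢ` are distinct
positive reals and `zᵢ ≠ 0` then `{f, Z} ∪ {ad_f^m Z : m ≥ 1}` spans `ℝⁿ` at every point. -/
theorem sniper_ensemble_lie_brackets_and_span (n : ℕ) (ω z : Fin n → ℝ)
    (f Z : (Fin n → ℝ) → (Fin n → ℝ))
    (hf : f = fun _ i => ω i)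
    (hZ : Z = fun Θ i => z i * (1 - Real.cos (Θ i))) :
    (∀ k : ℕ, 1 ≤ k →
      (adVF f Z (2 * k - 1)
        = fun Θ i => (-1 : ℝ) ^ (k - 1) * z i * ω i ^ (2 * k - 1) * Real.sin (Θ i)) ∧
      (adVF f Z (2 * k)
        = fun Θ i => (-1 : ℝ) ^ (k - 1) * z i * ω i ^ (2 * k) * Real.cos (Θ i))) ∧
    ((∀ i, 0 < ω i) → Function.Injective ω → (∀ i, z i ≠ 0) →
      ∀ Θ : Fin n → ℝ,
        Submodule.span ℝ
          ({f Θ, Z Θ} ∪ {x : Fin n → ℝ | ∃ m : ℕ, 1 ≤ m ∧ x = adVF f Z m Θ}) = ⊤) := by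
  subst hf hZ
  have had : ∀ m : ℕ, 1 ≤ m → adVF (fun _ i => ω i) (fun Θ i => z i * (1 - Real.cos (Θ i))) m
      = fun Θ i => z i * ω i ^ m * Ttrig m (Θ i) := by
    intro m hm
    obtain ⟨m', rfl⟩ : ∃ m', m = m' + 1 := ⟨m - 1, by omega⟩
    exact adVF_eq ω z m'
  constructor
  · intro k hk
    constructor
    · rw [had _ (by omega), Ttrig_odd k hk]
      funext Θ i; ring
    · rw [had _ (by omega), Ttrig_even k hk]
      funext Θ i; ring
  · intro hω hinj hz Θ
    set S : Set (Fin n → ℝ) :=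
      {(fun _ i => ω i) Θ, (fun Θ i => z i * (1 - Real.cos (Θ i))) Θ} ∪
        {x : Fin n → ℝ | ∃ m : ℕ, 1 ≤ m ∧
          x = adVF (fun _ i => ω i) (fun Θ i => z i * (1 - Real.cos (Θ i))) m Θ} with hS
    rw [eq_top_iff]
    set x : Fin n → ℝ := fun j => ω j ^ 4 with hx
    have hxinj : Function.Injective x := fun a b hab =>
      hinj ((pow_left_inj₀ (hω a).le (hω b).le (by norm_num)).mp hab)
    have hdet : (Matrix.vandermonde x).det ≠ 0 :=
      Matrix.det_vandermonde_ne_zero_iff.mpr hxinj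
    have key : ∀ (i : Fin n) (r : ℕ), 1 ≤ r →
        ((z i * ω i ^ r * Ttrig r (Θ i)) • (Pi.single i (1:ℝ) : Fin n → ℝ)) ∈ Submodule.span ℝ S := by
      intro i r hr
      set V := Matrix.vandermonde x with hV
      set a := Matrix.mulVec V⁻¹ (Pi.single i (1:ℝ)) with ha
      have hVa : Matrix.mulVec V a = Pi.single i (1:ℝ) := by
        rw [ha, Matrix.mulVec_mulVec, Matrix.mul_nonsing_inv _ (isUnit_iff_ne_zero.mpr hdet),
          Matrix.one_mulVec]
      have hmem : (∑ k : Fin n, a k • adVF (fun _ i => ω i)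
          (fun Θ i => z i * (1 - Real.cos (Θ i))) (4 * (k : ℕ) + r) Θ) ∈ Submodule.span ℝ S :=
        Submodule.sum_mem _ fun k _ => Submodule.smul_mem _ _ (Submodule.subset_span
          (Set.mem_union_right _ ⟨4 * (k : ℕ) + r, by omega, rfl⟩))
      have heq : (∑ k : Fin n, a k • adVF (fun _ i => ω i)
          (fun Θ i => z i * (1 - Real.cos (Θ i))) (4 * (k : ℕ) + r) Θ)
          = (z i * ω i ^ r * Ttrig r (Θ i)) • (Pi.single i (1:ℝ) : Fin n → ℝ) := by
        funext j
        have hVaj := congrFun hVa j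
        simp only [hV, Matrix.mulVec, dotProduct, Matrix.vandermonde_apply] at hVaj
        have step : ∀ k : Fin n, a k * (adVF (fun _ i => ω i)
            (fun Θ i => z i * (1 - Real.cos (Θ i))) (4 * (k : ℕ) + r) Θ j)
            = (z j * ω j ^ r * Ttrig r (Θ j)) * (x j ^ (k : ℕ) * a k) := by
          intro k
          rw [had _ (by omega), Ttrig_mod]
          simp only [hx]
          rw [pow_add, pow_mul]
          ring
        calc (∑ k : Fin n, a k • adVF (fun _ i => ω i)
              (fun Θ i => z i * (1 - Real.cos (Θ i))) (4 * (k : ℕ) + r) Θ) j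
            = ∑ k : Fin n, (z j * ω j ^ r * Ttrig r (Θ j)) * (x j ^ (k : ℕ) * a k) := by
              rw [Finset.sum_apply]
              exact Finset.sum_congr rfl fun k _ => step k
          _ = (z j * ω j ^ r * Ttrig r (Θ j)) * ∑ k : Fin n, x j ^ (k : ℕ) * a k := by
              rw [Finset.mul_sum]
          _ = (z j * ω j ^ r * Ttrig r (Θ j)) * (Pi.single i (1:ℝ) : Fin n → ℝ) j := by rw [hVaj]
          _ = ((z i * ω i ^ r * Ttrig r (Θ i)) • (Pi.single i (1:ℝ) : Fin n → ℝ)) j := by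
              rw [Pi.smul_apply, smul_eq_mul]
              rcases eq_or_ne j i with rfl | hji
              · rw [Pi.single_eq_same]
              · rw [Pi.single_eq_of_ne hji, mul_zero, mul_zero]
      rw [← heq]
      exact hmem
    have hbasis : ∀ i, (Pi.single i 1 : Fin n → ℝ) ∈ Submodule.span ℝ S := by
      intro i
      rcases eq_or_ne (Real.sin (Θ i)) 0 with hs | hs
      · have hc : Real.cos (Θ i) ≠ 0 := by
          intro hc
          have h1 := Real.sin_sq_add_cos_sq (Θ i)
          rw [hs, hc] at h1
          norm_num at h1
        have h2 := key i 2 (by norm_num)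
        have hT : Ttrig 2 (Θ i) = Real.cos (Θ i) := by simp [Ttrig]
        rw [hT] at h2
        exact span_smul_mem
          (mul_ne_zero (mul_ne_zero (hz i) (pow_ne_zero _ (hω i).ne')) hc) h2
      · have h2 := key i 1 le_rfl
        have hT : Ttrig 1 (Θ i) = Real.sin (Θ i) := by simp [Ttrig]
        rw [hT] at h2
        exact span_smul_mem
          (mul_ne_zero (mul_ne_zero (hz i) (pow_ne_zero _ (hω i).ne')) hs) h2
    have hle : Submodule.span ℝ (Set.range fun i : Fin n => (Pi.single i 1 : Fin n → ℝ))
        ≤ Submodule.span ℝ S :=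
      Submodule.span_le.mpr (by rintro _ ⟨i, rfl⟩; exact hbasis i)
    have htop : Submodule.span ℝ
        (Set.range fun i : Fin n => (Pi.single i 1 : Fin n → ℝ)) = ⊤ := by
      have h1 := (Pi.basisFun ℝ (Fin n)).span_eq
      have h2 : ⇑(Pi.basisFun ℝ (Fin n))
          = fun i : Fin n => (Pi.single i 1 : Fin n → ℝ) := by
        funext i
        simp
      rwa [h2] at h1
    rw [← htop]
    exact hle
end

section
/- For the Sinusoidal PRC ensemble with f(Θ) = (ω₁,…,ωₙ)ᵀ and Z(Θ) = (zᵢ sin θᵢ)ᵢ, the iterated Lie brackets satisfy ad_f^{2k−1} Z = ((−1)^{k−1} zᵢ ωᵢ^{2k−1} cos θᵢ)ᵢ and ad_f^{2k} Z = ((−1)^{k} zᵢ ωᵢ^{2k} sin θᵢ)ᵢ, and if the ωᵢ > 0 are distinct and zᵢ ≠ 0 then these brackets together with Z span ℝⁿ at every point. -/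
open Real

lemma bracket_eq_aux {n : ℕ} (ω a : Fin n → ℝ) (h h' : ℝ → ℝ)
    (hd : ∀ t, HasDerivAt h (h' t) t) :
    lieBracketVF (fun _ i => ω i) (fun Θ i => a i * h (Θ i))
      = fun Θ i => a i * h' (Θ i) * ω i := by
  funext Θ j
  have hg : HasFDerivAt (fun Θ : Fin n → ℝ => fun i => a i * h (Θ i))
      ((ContinuousLinearMap.pi fun i =>
        (a i * h' (Θ i)) • ContinuousLinearMap.proj i :
          (Fin n → ℝ) →L[ℝ] (Fin n → ℝ))) Θ := by
    rw [hasFDerivAt_pi]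
    intro i
    have h1 : HasDerivAt (fun t => a i * h t) (a i * h' (Θ i)) (Θ i) :=
      (hd (Θ i)).const_mul (a i)
    have h2 := h1.comp_hasFDerivAt (f := fun Θ : Fin n → ℝ => Θ i) Θ
      ((ContinuousLinearMap.proj i : (Fin n → ℝ) →L[ℝ] ℝ).hasFDerivAt)
    exact h2
  have hc : fderiv ℝ (fun _ : Fin n → ℝ => fun i => ω i) Θ = 0 := fderiv_const_apply _
  simp only [lieBracketVF, hg.fderiv, hc]
  simp [ContinuousLinearMap.pi_apply, mul_comm]

lemma adVF_zero {n : ℕ} (f Z : (Fin n → ℝ) → (Fin n → ℝ)) : adVF f Z 0 = Z := rfl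

lemma adVF_succ {n : ℕ} (f Z : (Fin n → ℝ) → (Fin n → ℝ)) (k : ℕ) :
    adVF f Z (k + 1) = lieBracketVF f (adVF f Z k) := rfl

lemma ad_formula_aux {n : ℕ} (ω z : Fin n → ℝ) :
    ∀ k : ℕ,
      (adVF (fun _ i => ω i) (fun Θ i => z i * Real.sin (Θ i)) (2 * k)
        = fun Θ i => (-1 : ℝ) ^ k * z i * ω i ^ (2 * k) * Real.sin (Θ i)) ∧
      (adVF (fun _ i => ω i) (fun Θ i => z i * Real.sin (Θ i)) (2 * k + 1)
        = fun Θ i => (-1 : ℝ) ^ k * z i * ω i ^ (2 * k + 1) * Real.cos (Θ i)) := by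
  intro k
  induction k with
  | zero =>
    constructor
    · rw [show 2 * 0 = 0 from rfl, adVF_zero]
      funext Θ i; ring
    · rw [show 2 * 0 + 1 = 0 + 1 from rfl, adVF_succ, adVF_zero]
      rw [bracket_eq_aux ω z Real.sin Real.cos (fun t => Real.hasDerivAt_sin t)]
      funext Θ i; ring
  | succ k ih =>
    have heven : adVF (fun _ i => ω i) (fun Θ i => z i * Real.sin (Θ i)) (2 * (k + 1))
        = fun Θ i => (-1 : ℝ) ^ (k + 1) * z i * ω i ^ (2 * (k + 1)) * Real.sin (Θ i) := by
      have h1 : 2 * (k + 1) = (2 * k + 1) + 1 := by ring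
      rw [h1, adVF_succ]
      rw [ih.2]
      have h2 : (fun (Θ : Fin n → ℝ) i =>
          (-1 : ℝ) ^ k * z i * ω i ^ (2 * k + 1) * Real.cos (Θ i))
          = fun Θ i => ((-1 : ℝ) ^ k * z i * ω i ^ (2 * k + 1)) * Real.cos (Θ i) := by
        funext Θ i; ring
      rw [h2, bracket_eq_aux ω _ Real.cos (fun t => -Real.sin t)
        (fun t => Real.hasDerivAt_cos t)]
      funext Θ i
      simp only [pow_succ]
      ring
    refine ⟨heven, ?_⟩
    rw [adVF_succ, heven]
    have h2 : (fun (Θ : Fin n → ℝ) i =>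
        (-1 : ℝ) ^ (k + 1) * z i * ω i ^ (2 * (k + 1)) * Real.sin (Θ i))
        = fun Θ i => ((-1 : ℝ) ^ (k + 1) * z i * ω i ^ (2 * (k + 1))) * Real.sin (Θ i) := by
      funext Θ i; ring
    rw [h2, bracket_eq_aux ω _ Real.sin Real.cos (fun t => Real.hasDerivAt_sin t)]
    funext Θ i
    simp only [pow_succ]
    ring

/-- If all the vectors `(c j * r j ^ k)ⱼ` lie in a submodule, then so does
`(c j * P.eval (r j))ⱼ` for any polynomial `P`. -/
lemma poly_comb_mem {n : ℕ} (r c : Fin n → ℝ) (p : Submodule ℝ (Fin n → ℝ))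
    (hA : ∀ k : ℕ, (fun j => c j * r j ^ k) ∈ p) (P : Polynomial ℝ) :
    (fun j => c j * P.eval (r j)) ∈ p := by
  have hfun : (fun j => c j * P.eval (r j))
      = ∑ k ∈ Finset.range (P.natDegree + 1),
          P.coeff k • (fun j => c j * r j ^ k) := by
    funext j
    rw [Finset.sum_apply]
    simp only [Pi.smul_apply, smul_eq_mul]
    rw [Polynomial.eval_eq_sum_range, Finset.mul_sum]
    congr 1; funext k; ring
  rw [hfun]
  exact Submodule.sum_mem p fun k _ => Submodule.smul_mem p _ (hA k)

/-- For the Sinusoidal PRC ensemble with constant drift `f(Θ) = (ω₁,…,ωₙ)` and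
`Z(Θ)ᵢ = zᵢ sin θᵢ`, the iterated Lie brackets are
`ad_f^{2k−1} Z = ((−1)^{k−1} zᵢ ωᵢ^{2k−1} cos θᵢ)ᵢ` and
`ad_f^{2k} Z = ((−1)^{k} zᵢ ωᵢ^{2k} sin θᵢ)ᵢ` for `k ≥ 1`; and if the `ωᵢ > 0` are distinct
and `zᵢ ≠ 0` then these brackets together with `Z` span `ℝⁿ` at every point. -/
theorem sinusoidal_ensemble_lie_brackets_and_span (n : ℕ) (ω z : Fin n → ℝ)
    (f Z : (Fin n → ℝ) → (Fin n → ℝ))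
    (hf : f = fun _ i => ω i)
    (hZ : Z = fun Θ i => z i * Real.sin (Θ i)) :
    (∀ k : ℕ, 1 ≤ k →
      (adVF f Z (2 * k - 1)
        = fun Θ i => (-1 : ℝ) ^ (k - 1) * z i * ω i ^ (2 * k - 1) * Real.cos (Θ i)) ∧
      (adVF f Z (2 * k)
        = fun Θ i => (-1 : ℝ) ^ k * z i * ω i ^ (2 * k) * Real.sin (Θ i))) ∧
    ((∀ i, 0 < ω i) → Function.Injective ω → (∀ i, z i ≠ 0) →
      ∀ Θ : Fin n → ℝ,
        Submodule.span ℝ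
          (insert (Z Θ) {x : Fin n → ℝ | ∃ m : ℕ, 1 ≤ m ∧ x = adVF f Z m Θ}) = ⊤) := by
  subst hf hZ
  have had := ad_formula_aux ω z
  constructor
  · intro k hk
    obtain ⟨m, rfl⟩ : ∃ m, k = m + 1 := ⟨k - 1, (Nat.succ_pred_eq_of_pos hk).symm⟩
    constructor
    · have h1 : 2 * (m + 1) - 1 = 2 * m + 1 := by omega
      have h2 : m + 1 - 1 = m := by omega
      rw [h1, h2, (had m).2]
    · exact (had (m + 1)).1
  · intro hωpos hωinj hz Θ
    set S : Set (Fin n → ℝ) :=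
      insert ((fun Θ i => z i * Real.sin (Θ i)) Θ)
        {x : Fin n → ℝ | ∃ m : ℕ, 1 ≤ m ∧
          x = adVF (fun _ i => ω i) (fun Θ i => z i * Real.sin (Θ i)) m Θ} with hS
    set p := Submodule.span ℝ S with hp
    set r : Fin n → ℝ := fun i => ω i ^ 2 with hr
    have hrinj : Set.InjOn r (Finset.univ : Finset (Fin n)) := by
      intro i _ j _ hij
      apply hωinj
      have hij' : ω i ^ 2 = ω j ^ 2 := hij
      have := hωpos i; have := hωpos j
      nlinarith [hij']
    -- sine family
    have hsin : ∀ k : ℕ, (fun j => (z j * Real.sin (Θ j)) * r j ^ k) ∈ p := by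
      intro k
      rcases Nat.eq_zero_or_pos k with hk | hk
      · subst hk
        have : (fun j => (z j * Real.sin (Θ j)) * r j ^ 0)
            = (fun Θ i => z i * Real.sin (Θ i)) Θ := by
          funext j; simp
        rw [this]
        exact Submodule.subset_span (Set.mem_insert _ _)
      · have hmem : adVF (fun _ i => ω i) (fun Θ i => z i * Real.sin (Θ i)) (2 * k) Θ ∈ S := by
          refine Set.mem_insert_iff.mpr (Or.inr ⟨2 * k, by omega, rfl⟩)
        have h1 : (fun j => (z j * Real.sin (Θ j)) * r j ^ k)
            = ((-1 : ℝ) ^ k) •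
              adVF (fun _ i => ω i) (fun Θ i => z i * Real.sin (Θ i)) (2 * k) Θ := by
          rw [(had k).1]
          funext j
          simp only [Pi.smul_apply, smul_eq_mul, hr]
          rw [← pow_mul]
          have : (-1 : ℝ) ^ k * ((-1 : ℝ) ^ k * z j * ω j ^ (2 * k) * Real.sin (Θ j))
              = ((-1 : ℝ) * (-1)) ^ k * (z j * ω j ^ (2 * k) * Real.sin (Θ j)) := by
            rw [mul_pow]; ring
          rw [this]
          norm_num
          ring
        rw [h1]
        exact Submodule.smul_mem p _ (Submodule.subset_span hmem)
    -- cosine family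
    have hcos : ∀ k : ℕ, (fun j => (z j * ω j * Real.cos (Θ j)) * r j ^ k) ∈ p := by
      intro k
      have hmem : adVF (fun _ i => ω i) (fun Θ i => z i * Real.sin (Θ i)) (2 * k + 1) Θ ∈ S :=
        Set.mem_insert_iff.mpr (Or.inr ⟨2 * k + 1, by omega, rfl⟩)
      have h1 : (fun j => (z j * ω j * Real.cos (Θ j)) * r j ^ k)
          = ((-1 : ℝ) ^ k) •
            adVF (fun _ i => ω i) (fun Θ i => z i * Real.sin (Θ i)) (2 * k + 1) Θ := by
        rw [(had k).2]
        funext j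
        simp only [Pi.smul_apply, smul_eq_mul, hr]
        rw [← pow_mul]
        have : (-1 : ℝ) ^ k * ((-1 : ℝ) ^ k * z j * ω j ^ (2 * k + 1) * Real.cos (Θ j))
            = ((-1 : ℝ) * (-1)) ^ k * (z j * ω j ^ (2 * k + 1) * Real.cos (Θ j)) := by
          rw [mul_pow]; ring
        rw [this]
        norm_num
        rw [pow_succ]
        ring
      rw [h1]
      exact Submodule.smul_mem p _ (Submodule.subset_span hmem)
    -- per-coordinate single vectors
    have hsingle : ∀ i : Fin n, (Pi.single i (1 : ℝ) : Fin n → ℝ) ∈ p := by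
      intro i
      have key : ∀ c : Fin n → ℝ, (∀ k : ℕ, (fun j => c j * r j ^ k) ∈ p) →
          (Pi.single i (c i) : Fin n → ℝ) ∈ p := by
        intro c hc
        have := poly_comb_mem r c p hc (Lagrange.basis Finset.univ r i)
        have heq : (fun j => c j * (Lagrange.basis Finset.univ r i).eval (r j))
            = (Pi.single i (c i) : Fin n → ℝ) := by
          funext j
          by_cases hj : j = i
          · rw [hj, Lagrange.eval_basis_self hrinj (Finset.mem_univ i)]
            simp
          · rw [Lagrange.eval_basis_of_ne (Ne.symm hj) (Finset.mem_univ j)]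
            simp [Pi.single_eq_of_ne hj]
        rwa [heq] at this
      have hs := key _ hsin
      have hcc := key _ hcos
      have hone : ∀ a : ℝ, a ≠ 0 → (Pi.single i a : Fin n → ℝ) ∈ p →
          (Pi.single i (1 : ℝ) : Fin n → ℝ) ∈ p := by
        intro a ha hmem
        have : (Pi.single i (1 : ℝ) : Fin n → ℝ) = a⁻¹ • (Pi.single i a : Fin n → ℝ) := by
          funext j
          by_cases hj : j = i
          · subst hj; simp [inv_mul_cancel₀ ha]
          · simp [Pi.single_eq_of_ne hj]
        rw [this]
        exact Submodule.smul_mem p _ hmem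
      by_cases hsn : Real.sin (Θ i) = 0
      · have hcn : Real.cos (Θ i) ≠ 0 := by
          intro hc0
          have := Real.sin_sq_add_cos_sq (Θ i)
          rw [hsn, hc0] at this; norm_num at this
        exact hone _ (by
          have := hωpos i
          exact mul_ne_zero (mul_ne_zero (hz i) (ne_of_gt this)) hcn) hcc
      · exact hone _ (mul_ne_zero (hz i) hsn) hs
    rw [eq_top_iff]
    intro x _
    have hx : x = ∑ i, x i • (Pi.single i (1 : ℝ) : Fin n → ℝ) := by
      have h1 : x = ∑ i, (Pi.single i (x i) : Fin n → ℝ) := (Finset.univ_sum_single x).symm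
      rw [h1]
      congr 1
      funext i
      funext j
      by_cases hj : j = i
      · subst hj; simp
      · simp [Pi.single_eq_of_ne hj]
    rw [hx]
    exact Submodule.sum_mem p fun i _ => Submodule.smul_mem p _ (hsingle i)
end

section
/- (No-crossing lemma) Let θ₁, θ₂ solve θ̇ᵢ = (1+Iᵢ) + (1−Iᵢ)cos θᵢ + (1 − cos θᵢ)u(t) with the same continuous input u, θ₁(0) = θ₂(0) = 0, and 0 < I₁ < I₂. Then θ₁(t) ≤ θ₂(t) for all t ≥ 0; moreover equality at a time τ > 0 can hold only when θ₁(τ) = θ₂(τ) ∈ 2πℤ. -/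
open Real Set Filter Asymptotics Topology

private lemma abs_cos_sub_cos_le' (a b : ℝ) : |Real.cos a - Real.cos b| ≤ |a - b| := by
  have h := Convex.norm_image_sub_le_of_norm_deriv_le (f := Real.cos)
    (s := (univ : Set ℝ)) (C := 1)
    (fun x _ => (Real.hasDerivAt_cos x).differentiableAt)
    (fun x _ => by
      rw [Real.deriv_cos, Real.norm_eq_abs, abs_neg]
      exact abs_le.2 ⟨Real.neg_one_le_sin x, Real.sin_le_one x⟩)
    convex_univ (mem_univ b) (mem_univ a)
  simpa using h

/-- No-crossing lemma: if `θ₁, θ₂` solve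
`θ̇ᵢ = (1+Iᵢ) + (1−Iᵢ)cos θᵢ + (1 − cos θᵢ)u(t)` with the same continuous input `u`,
`θ₁(0) = θ₂(0) = 0`, and `0 < I₁ < I₂`, then `θ₁(t) ≤ θ₂(t)` for all `t ≥ 0`; moreover
equality at a time `τ > 0` can only hold when `θ₁(τ) = θ₂(τ) ∈ 2πℤ`. -/
theorem theta_neuron_no_crossing (I₁ I₂ : ℝ) (hI₁ : 0 < I₁) (hI₁₂ : I₁ < I₂)
    (u : ℝ → ℝ) (hu : Continuous u) (θ₁ θ₂ : ℝ → ℝ)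
    (hθ₁ : ∀ t, HasDerivAt θ₁
      ((1 + I₁) + (1 - I₁) * Real.cos (θ₁ t) + (1 - Real.cos (θ₁ t)) * u t) t)
    (hθ₂ : ∀ t, HasDerivAt θ₂
      ((1 + I₂) + (1 - I₂) * Real.cos (θ₂ t) + (1 - Real.cos (θ₂ t)) * u t) t)
    (h0₁ : θ₁ 0 = 0) (h0₂ : θ₂ 0 = 0) :
    (∀ t : ℝ, 0 ≤ t → θ₁ t ≤ θ₂ t) ∧
    (∀ τ : ℝ, 0 < τ → θ₁ τ = θ₂ τ → ∃ k : ℤ, θ₁ τ = 2 * π * k) := by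
  -- the difference `d = θ₁ - θ₂` and its derivative
  set d : ℝ → ℝ := fun t => θ₁ t - θ₂ t with hd_def
  set d' : ℝ → ℝ := fun t =>
    ((1 + I₁) + (1 - I₁) * Real.cos (θ₁ t) + (1 - Real.cos (θ₁ t)) * u t) -
    ((1 + I₂) + (1 - I₂) * Real.cos (θ₂ t) + (1 - Real.cos (θ₂ t)) * u t) with hd'_def
  have hdd : ∀ t, HasDerivAt d (d' t) t := fun t => (hθ₁ t).sub (hθ₂ t)
  have hd'_eq : ∀ t, d' t =
      (I₁ - I₂) * (1 - Real.cos (θ₁ t)) +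
      (1 - I₂ - u t) * (Real.cos (θ₁ t) - Real.cos (θ₂ t)) := by
    intro t; simp only [hd'_def]; ring
  have hθ₁c : Continuous θ₁ := by
    rw [continuous_iff_continuousAt]; exact fun t => (hθ₁ t).continuousAt
  have hθ₂c : Continuous θ₂ := by
    rw [continuous_iff_continuousAt]; exact fun t => (hθ₂ t).continuousAt
  have hdc : Continuous d := hθ₁c.sub hθ₂c
  -- the positive part `φ = max d 0` and its (right-)derivative `g`
  set φ : ℝ → ℝ := fun t => max (d t) 0 with hφ_def
  set g : ℝ → ℝ := fun t => if 0 < d t then d' t else 0 with hg_def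
  have hφc : Continuous φ := hdc.max continuous_const
  -- at a crossing the derivative of the difference is nonpositive
  have hcross : ∀ x, d x = 0 → d' x ≤ 0 := by
    intro x hx
    have hθeq : θ₁ x = θ₂ x := by
      have := sub_eq_zero.1 hx
      exact this
    rw [hd'_eq, hθeq, sub_self, mul_zero, add_zero]
    have h1 : Real.cos (θ₂ x) ≤ 1 := Real.cos_le_one _
    nlinarith
  -- `φ` has right derivative `g x` everywhere
  have hφderiv : ∀ x : ℝ, HasDerivWithinAt φ (g x) (Ici x) x := by
    intro x
    rcases lt_trichotomy (d x) 0 with hx | hx | hx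
    · -- d x < 0 : φ = 0 near x
      have hev : ∀ᶠ z in 𝓝 x, d z < 0 :=
        (hdc.continuousAt).eventually (eventually_lt_nhds hx)
      have heq : φ =ᶠ[𝓝 x] (fun _ => (0 : ℝ)) :=
        hev.mono fun z hz => max_eq_right hz.le
      have h0 : HasDerivAt φ 0 x :=
        (hasDerivAt_const x (0 : ℝ)).congr_of_eventuallyEq heq
      have : g x = 0 := by simp [hg_def, not_lt.2 hx.le, asymm hx]
      rw [this]
      exact h0.hasDerivWithinAt
    · -- d x = 0 : use the bound `0 ≤ φ z - φ x ≤ |d z - d x - (z-x) d' x|` for `z ≥ x`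
      have hg0 : g x = 0 := by simp [hg_def, hx]
      rw [hg0]
      rw [hasDerivWithinAt_iff_isLittleO]
      have hlo : (fun z => d z - d x - (z - x) • d' x) =o[𝓝 x] fun z => z - x :=
        hasDerivAt_iff_isLittleO.1 (hdd x)
      have hlo' : (fun z => d z - d x - (z - x) • d' x) =o[𝓝[Ici x] x] fun z => z - x :=
        hlo.mono nhdsWithin_le_nhds
    -- `φ z - φ x - (z-x)•0 = φ z`, bounded pointwise by the little-o function on `Ici x`
      have hbig : (fun z => φ z - φ x - (z - x) • (0 : ℝ)) =O[𝓝[Ici x] x]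
          (fun z => d z - d x - (z - x) • d' x) := by
        apply IsBigO.of_bound 1
        filter_upwards [self_mem_nhdsWithin] with z hz
        have hzx : (0 : ℝ) ≤ z - x := sub_nonneg.2 hz
        have hd'x : d' x ≤ 0 := hcross x hx
        have hφx : φ x = 0 := by simp [hφ_def, hx]
        simp only [smul_eq_mul, mul_zero, sub_zero, hφx, hx, Real.norm_eq_abs, one_mul]
        rcases le_or_gt (d z) 0 with hdz | hdz
        · have : φ z = 0 := max_eq_right hdz
          rw [this]; simp [abs_nonneg]
        · have h1 : φ z = d z := max_eq_left hdz.le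
          rw [h1]
          have h2 : d z ≤ d z - (z - x) * d' x := by nlinarith
          rw [abs_of_pos hdz]
          calc d z ≤ d z - (z - x) * d' x := h2
            _ ≤ |d z - (z - x) * d' x| := le_abs_self _
      exact hbig.trans_isLittleO hlo'
    · -- 0 < d x : φ = d near x
      have hev : ∀ᶠ z in 𝓝 x, 0 < d z :=
        (hdc.continuousAt).eventually (eventually_gt_nhds hx)
      have heq : φ =ᶠ[𝓝 x] d := hev.mono fun z hz => max_eq_left hz.le
      have h0 : HasDerivAt φ (d' x) x := (hdd x).congr_of_eventuallyEq heq
      have : g x = d' x := by simp [hg_def, hx]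
      rw [this]
      exact h0.hasDerivWithinAt
  -- Part 1: θ₁ ≤ θ₂ on [0, ∞), via Grönwall on each interval [0, b]
  have part1 : ∀ t : ℝ, 0 ≤ t → θ₁ t ≤ θ₂ t := by
    intro b hb
    rcases eq_or_lt_of_le hb with rfl | hb
    · rw [h0₁, h0₂]
    -- Lipschitz-type bound on [0, b]
    obtain ⟨K, hK⟩ := (isCompact_Icc (a := (0:ℝ)) (b := b)).exists_bound_of_continuousOn
      ((continuous_const.sub hu).continuousOn (f := fun t => 1 - I₂ - u t))
    have hbound : ∀ x ∈ Ico (0:ℝ) b, g x ≤ K * φ x + 0 := by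
      intro x hx
      rw [add_zero]
      have hK0 : 0 ≤ K := le_trans (norm_nonneg _) (hK 0 ⟨le_refl 0, hb.le⟩)
      rcases le_or_gt (d x) 0 with hdx | hdx
      · have hgx : g x = 0 := by simp [hg_def, not_lt.2 hdx]
        rw [hgx]
        exact mul_nonneg hK0 (le_max_right _ _)
      · have hgx : g x = d' x := by simp [hg_def, hdx]
        have hφx : φ x = d x := max_eq_left hdx.le
        rw [hgx, hφx, hd'_eq]
        have h1 : (I₁ - I₂) * (1 - Real.cos (θ₁ x)) ≤ 0 := by
          have := Real.cos_le_one (θ₁ x); nlinarith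
        have h2 : (1 - I₂ - u x) * (Real.cos (θ₁ x) - Real.cos (θ₂ x)) ≤ K * d x := by
          have hKx : |1 - I₂ - u x| ≤ K := by
            have := hK x ⟨hx.1, hx.2.le⟩
            simpa [Real.norm_eq_abs] using this
          have hc : |Real.cos (θ₁ x) - Real.cos (θ₂ x)| ≤ |θ₁ x - θ₂ x| :=
            abs_cos_sub_cos_le' _ _
          have habs : |θ₁ x - θ₂ x| = d x := abs_of_pos hdx
          calc (1 - I₂ - u x) * (Real.cos (θ₁ x) - Real.cos (θ₂ x))
              ≤ |(1 - I₂ - u x) * (Real.cos (θ₁ x) - Real.cos (θ₂ x))| := le_abs_self _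
            _ = |1 - I₂ - u x| * |Real.cos (θ₁ x) - Real.cos (θ₂ x)| := abs_mul _ _
            _ ≤ K * |θ₁ x - θ₂ x| := by
                apply mul_le_mul hKx hc (abs_nonneg _)
                exact (abs_nonneg _).trans hKx
            _ = K * d x := by rw [habs]
        linarith
    have hg := le_gronwallBound_of_liminf_deriv_right_le (f := φ) (f' := g)
      (δ := 0) (K := K) (ε := 0) (a := 0) (b := b)
      hφc.continuousOn
      (fun x _ r hr => ((hφderiv x).liminf_right_slope_le hr).mono fun z hz => by
        simpa [slope_def_field, div_eq_inv_mul] using hz)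
      (by simp [hφ_def, hd_def, h0₁, h0₂])
      hbound
    have := hg b ⟨hb.le, le_refl b⟩
    rw [sub_zero, gronwallBound_ε0_δ0] at this
    have hφb : φ b ≤ 0 := this
    have hdb : d b ≤ 0 := le_trans (le_max_left _ _) hφb
    exact sub_nonpos.1 hdb
  refine ⟨part1, ?_⟩
  -- Part 2: equality only at multiples of 2π
  intro τ hτ hθeq
  have hdτ : d τ = 0 := sub_eq_zero.2 hθeq
  -- τ is a local maximum of d, so d'(τ) = 0
  have hmax : IsLocalMax d τ := by
    have hev : ∀ᶠ z in 𝓝 τ, 0 < z := eventually_gt_nhds hτ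
    filter_upwards [hev] with z hz
    rw [hdτ]
    have := part1 z hz.le
    simpa [hd_def] using sub_nonpos.2 this
  have hzero : d' τ = 0 := hmax.hasDerivAt_eq_zero (hdd τ)
  -- hence cos(θ₁ τ) = 1
  have hcos : Real.cos (θ₁ τ) = 1 := by
    rw [hd'_eq, hθeq, sub_self, mul_zero, add_zero] at hzero
    have hI : I₁ - I₂ < 0 := sub_neg.2 hI₁₂
    have : 1 - Real.cos (θ₂ τ) = 0 := by
      rcases mul_eq_zero.1 hzero with h | h
      · exact absurd h hI.ne
      · exact h
    rw [hθeq]; linarith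
  obtain ⟨n, hn⟩ := (Real.cos_eq_one_iff (θ₁ τ)).1 hcos
  exact ⟨n, by rw [← hn]; ring⟩
end

section
/- At a point (θ₁, θ₂) with θ₁ ≡ 2mπ and θ₂ ≡ 2(n+m)π (m, n ∈ ℤ), the phase velocities of the two-Theta-neuron system equal θ̇₁ = θ̇₂ = 2 regardless of the control input u; consequently no control can keep the system at such a point or on the line θ₁ = θ₂ + 2nπ unless I₁ = I₂. -/
open Real

lemma cos_two_pi_int (k : ℤ) : Real.cos (2 * π * k) = 1 := by
  rw [Real.cos_eq_one_iff]
  exact ⟨k, by ring⟩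

/-- At a point with `θ₁ = 2mπ` and `θ₂ = 2(n+m)π` (`m, n ∈ ℤ`), the phase velocities of the
two-Theta-neuron system `θ̇ᵢ = αᵢ + βᵢcos θᵢ + (1 − cos θᵢ)u` (with `αᵢ = 1 + Iᵢ`,
`βᵢ = 1 − Iᵢ`) equal `θ̇₁ = θ̇₂ = 2` regardless of the control input `u`; consequently, when
`I₁ ≠ I₂`, no control can keep the system on the line `θ₁ = θ₂ + 2nπ`: equality of the phase
velocities there forces `θ₁ ∈ 2πℤ`. -/
theorem two_theta_neuron_velocity_two (I₁ I₂ : ℝ) (hI : I₁ ≠ I₂) :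
    (∀ (m n : ℤ) (u : ℝ),
      (1 + I₁) + (1 - I₁) * Real.cos (2 * π * m) + (1 - Real.cos (2 * π * m)) * u = 2 ∧
      (1 + I₂) + (1 - I₂) * Real.cos (2 * π * (n + m))
        + (1 - Real.cos (2 * π * (n + m))) * u = 2) ∧
    (∀ (n : ℤ) (θ₁ θ₂ u : ℝ), θ₁ = θ₂ + 2 * π * n →
      (1 + I₁) + (1 - I₁) * Real.cos θ₁ + (1 - Real.cos θ₁) * u
        = (1 + I₂) + (1 - I₂) * Real.cos θ₂ + (1 - Real.cos θ₂) * u →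
      ∃ m : ℤ, θ₁ = 2 * π * m) := by
  constructor
  · intro m n u
    have h1 : Real.cos (2 * π * (m : ℝ)) = 1 := cos_two_pi_int m
    have h2 : Real.cos (2 * π * ((n : ℝ) + (m : ℝ))) = 1 := by
      have := cos_two_pi_int (n + m); push_cast at this ⊢; exact this
    rw [h1, h2]; constructor <;> ring
  · intro n θ₁ θ₂ u hθ heq
    have hc : Real.cos θ₁ = Real.cos θ₂ := by
      rw [hθ, show θ₂ + 2 * π * n = θ₂ + n * (2 * π) by ring,
        Real.cos_add_int_mul_two_pi]
    rw [hc] at heq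
    have h1 : Real.cos θ₂ = 1 := by
      have : (I₁ - I₂) * (1 - Real.cos θ₂) = 0 := by linarith
      rcases mul_eq_zero.1 this with h | h
      · exact absurd (by linarith) hI
      · linarith
    have h1' : Real.cos θ₁ = 1 := by rw [hc, h1]
    obtain ⟨m, hm⟩ := (Real.cos_eq_one_iff θ₁).1 h1'
    exact ⟨m, by linarith⟩
end
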